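/- Let A and B be n×n complex matrices. Then 2·‖A+B‖_F² ≤ (√2 + 1)·‖|A|+|B|‖_F², where ‖·‖_F denotes the Frobenius norm. -/

import Mathlib

open scoped Matrix ComplexOrder

/-- The absolute value `|A| := (A*A)^{1/2}` of a square complex matrix, i.e. the (unique)
positive semidefinite square root of `Aᴴ * A`. -/
noncomputable def matrixAbs {n : ℕ} (A : Matrix (Fin n) (Fin n) ℂ) :
    Matrix (Fin n) (Fin n) ℂ :=
  (Matrix.posSemidef_conjTranspose_mul_self A).1.eigenvectorUnitary.1 *
    Matrix.diagonal ((↑) ∘ Real.sqrt ∘ (Matrix.posSemidef_conjTranspose_mul_self A).1.eigenvalues) *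
    (star (Matrix.posSemidef_conjTranspose_mul_self A).1.eigenvectorUnitary : Matrix (Fin n) (Fin n) ℂ)

/-- The Frobenius norm `‖A‖_F = (tr |A|²)^{1/2}` of a square complex matrix. -/
noncomputable def frobeniusNorm' {n : ℕ} (A : Matrix (Fin n) (Fin n) ℂ) : ℝ :=
  Real.sqrt ((matrixAbs A ^ 2).trace.re)

open Finset

namespace TwoMulAux

variable {n : ℕ}

noncomputable def psdSqrt (M : Matrix (Fin n) (Fin n) ℂ) (hM : M.PosSemidef) :
    Matrix (Fin n) (Fin n) ℂ :=
  (hM.1.eigenvectorUnitary : Matrix (Fin n) (Fin n) ℂ) *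
    Matrix.diagonal (((↑) : ℝ → ℂ) ∘ Real.sqrt ∘ hM.1.eigenvalues) *
    (star hM.1.eigenvectorUnitary : Matrix (Fin n) (Fin n) ℂ)

lemma matrixAbs_eq (A : Matrix (Fin n) (Fin n) ℂ) :
    matrixAbs A = psdSqrt (Aᴴ * A) (Matrix.posSemidef_conjTranspose_mul_self A) := rfl

lemma psdSqrt_mul_self (M : Matrix (Fin n) (Fin n) ℂ) (hM : M.PosSemidef) :
    psdSqrt M hM * psdSqrt M hM = M := by
  set U : Matrix (Fin n) (Fin n) ℂ := (hM.1.eigenvectorUnitary : Matrix (Fin n) (Fin n) ℂ)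
    with hU
  set sU : Matrix (Fin n) (Fin n) ℂ := (star hM.1.eigenvectorUnitary : Matrix (Fin n) (Fin n) ℂ)
    with hsU
  set D' : Matrix (Fin n) (Fin n) ℂ :=
    Matrix.diagonal (((↑) : ℝ → ℂ) ∘ Real.sqrt ∘ hM.1.eigenvalues) with hD'
  have hUU : sU * U = 1 := Matrix.mem_unitaryGroup_iff'.mp hM.1.eigenvectorUnitary.2
  have hD : D' * D' = Matrix.diagonal (fun i => (hM.1.eigenvalues i : ℂ)) := by
    rw [hD', Matrix.diagonal_mul_diagonal]
    congr 1
    funext i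
    simp only [Function.comp_apply]
    rw [← Complex.ofReal_mul, Real.mul_self_sqrt (hM.eigenvalues_nonneg i)]
  have spec : M = U * Matrix.diagonal (fun i => (hM.1.eigenvalues i : ℂ)) * sU :=
    hM.1.spectral_theorem
  calc psdSqrt M hM * psdSqrt M hM = U * (D' * (sU * U) * D') * sU := by
        show U * D' * sU * (U * D' * sU) = _
        simp only [Matrix.mul_assoc]
    _ = M := by rw [hUU, Matrix.mul_one, hD]; exact spec.symm

lemma psdSqrt_psd (M : Matrix (Fin n) (Fin n) ℂ) (hM : M.PosSemidef) :
    (psdSqrt M hM).PosSemidef :=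
  (Matrix.posSemidef_diagonal_iff.mpr fun i => Complex.zero_le_real.mpr
    (Real.sqrt_nonneg _)).mul_mul_conjTranspose_same
    (hM.1.eigenvectorUnitary : Matrix (Fin n) (Fin n) ℂ)

lemma psd_eq_ctm (S : Matrix (Fin n) (Fin n) ℂ) (hS : S.PosSemidef) :
    ∃ W : Matrix (Fin n) (Fin n) ℂ, S = Wᴴ * W :=
  ⟨psdSqrt S hS, by rw [(psdSqrt_psd S hS).1.eq, psdSqrt_mul_self]⟩

lemma re_trace_ctm (X : Matrix (Fin n) (Fin n) ℂ) :
    ((Xᴴ*X).trace).re = ∑ j, ∑ k, Complex.normSq (X k j) := by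
  simp [Matrix.trace, Matrix.mul_apply, Matrix.conjTranspose_apply, Complex.mul_conj,
    Complex.normSq_apply]

lemma re_trace_ctm_nonneg (X : Matrix (Fin n) (Fin n) ℂ) : 0 ≤ ((Xᴴ*X).trace).re := by
  rw [re_trace_ctm]
  exact Finset.sum_nonneg fun j _ => Finset.sum_nonneg fun k _ => Complex.normSq_nonneg _

lemma proj_bound (P X : Matrix (Fin n) (Fin n) ℂ) (hP : Pᴴ = P) (hP2 : P*P = P) :
    ((Xᴴ*(P*X)).trace).re ≤ ((Xᴴ*X).trace).re := by
  have h1 : (1 - P) * (1 - P) = 1 - P := by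
    rw [sub_mul, mul_sub, mul_sub, hP2, one_mul, mul_one, one_mul]; abel
  have h : Xᴴ*X - Xᴴ*(P*X) = ((1-P)*X)ᴴ*((1-P)*X) := by
    rw [Matrix.conjTranspose_mul, Matrix.conjTranspose_sub, Matrix.conjTranspose_one, hP,
      Matrix.mul_assoc, ← Matrix.mul_assoc (1-P), h1]
    rw [Matrix.sub_mul, Matrix.mul_sub, Matrix.one_mul]
  have h2 := re_trace_ctm_nonneg ((1-P)*X)
  rw [← h, Matrix.trace_sub, Complex.sub_re] at h2
  linarith

lemma bessel (M N : Matrix (Fin n) (Fin n) ℂ) (p q : Fin n → ℝ)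
    (hM : Mᴴ * M = Matrix.diagonal fun i => (p i : ℂ)^2)
    (hN : Nᴴ * N = Matrix.diagonal fun j => (q j : ℂ)^2) :
    ∑ i, ∑ j, Complex.normSq ((Mᴴ*N) i j) * ((q j)⁻¹)^2 ≤ ∑ i, (p i)^2 := by
  classical
  set Y : Matrix (Fin n) (Fin n) ℂ := N * Matrix.diagonal (fun j => ((q j : ℂ))⁻¹) with hY
  set F : Matrix (Fin n) (Fin n) ℂ := Mᴴ * Y with hF
  set δ : Fin n → ℂ := fun j => ((q j : ℂ))^2 * (((q j : ℂ))⁻¹ * ((q j : ℂ))⁻¹) with hδ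
  have hFe : ∀ i j, F i j = (Mᴴ*N) i j * ((q j : ℂ))⁻¹ := by
    intro i j
    rw [hF, hY, ← Matrix.mul_assoc, Matrix.mul_diagonal]
  have hL : ∑ i, ∑ j, Complex.normSq ((Mᴴ*N) i j) * ((q j)⁻¹)^2
      = ((Fᴴ*F).trace).re := by
    rw [re_trace_ctm, Finset.sum_comm]
    refine Finset.sum_congr rfl fun i _ => Finset.sum_congr rfl fun j _ => ?_
    rw [hFe, Complex.normSq_mul, ← Complex.ofReal_inv, Complex.normSq_ofReal]
    ring
  have hstar : (star fun j => ((q j : ℂ))⁻¹) = fun j => ((q j : ℂ))⁻¹ := by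
    funext j
    simp [← Complex.ofReal_inv]
  have hYY : Yᴴ * Y = Matrix.diagonal δ := by
    calc Yᴴ * Y = Matrix.diagonal (star fun j => ((q j : ℂ))⁻¹) * ((Nᴴ * N)
          * Matrix.diagonal (fun j => ((q j : ℂ))⁻¹)) := by
          rw [hY, Matrix.conjTranspose_mul, Matrix.diagonal_conjTranspose]
          simp only [Matrix.mul_assoc]
      _ = Matrix.diagonal δ := by
          rw [hstar, hN, Matrix.diagonal_mul_diagonal, Matrix.diagonal_mul_diagonal]
          exact congrArg Matrix.diagonal (funext fun j => by rw [hδ]; ring)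
  have hfun : (fun j => ((q j : ℂ))⁻¹ * δ j) = fun j => ((q j : ℂ))⁻¹ := by
    funext j
    rcases eq_or_ne (q j) 0 with h | h
    · simp [hδ, h]
    · have hq : ((q j : ℂ)) ≠ 0 := by exact_mod_cast h
      rw [hδ]
      field_simp
  have hYd : Y * Matrix.diagonal δ = Y := by
    rw [hY, Matrix.mul_assoc, Matrix.diagonal_mul_diagonal, hfun]
  have hP : (Y * Yᴴ)ᴴ = Y * Yᴴ := by
    rw [Matrix.conjTranspose_mul, Matrix.conjTranspose_conjTranspose]
  have hP2 : (Y * Yᴴ) * (Y * Yᴴ) = Y * Yᴴ := by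
    calc (Y * Yᴴ) * (Y * Yᴴ) = (Y * (Yᴴ * Y)) * Yᴴ := by
          simp only [Matrix.mul_assoc]
      _ = Y * Yᴴ := by rw [hYY, hYd]
  have hFF : (Fᴴ*F).trace = ((Mᴴᴴ)ᴴ*((Y*Yᴴ)*Mᴴᴴ)).trace := by
    rw [Matrix.trace_mul_comm, hF, Matrix.conjTranspose_mul,
      Matrix.conjTranspose_conjTranspose]
    simp only [Matrix.mul_assoc]
  have hMM : ((Mᴴᴴ)ᴴ*Mᴴᴴ).trace.re = ∑ i, (p i)^2 := by
    simp only [Matrix.conjTranspose_conjTranspose]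
    rw [hM, Matrix.trace_diagonal]
    rw [show (∑ i, ((p i : ℂ))^2) = ((∑ i, (p i)^2 : ℝ) : ℂ) by push_cast; ring]
    exact Complex.ofReal_re _
  rw [hL, hFF, ← hMM]
  exact proj_bound _ _ hP hP2

lemma conj_diag (A S U : Matrix (Fin n) (Fin n) ℂ) (p : Fin n → ℝ)
    (hUU : Uᴴ * U = 1)
    (spec : S = U * Matrix.diagonal (fun i => (p i : ℂ)) * Uᴴ)
    (hSA : S * S = Aᴴ * A) :
    (A*U)ᴴ * (A*U) = Matrix.diagonal fun i => (p i : ℂ)^2 := by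
  set D := Matrix.diagonal (fun i => (p i : ℂ)) with hD
  have hSU : S * U = U * D := by
    rw [spec, Matrix.mul_assoc, Matrix.mul_assoc, hUU, Matrix.mul_one]
  calc (A*U)ᴴ * (A*U) = Uᴴ * ((Aᴴ*A) * U) := by
        rw [Matrix.conjTranspose_mul]
        simp only [Matrix.mul_assoc]
    _ = Uᴴ * (S * (S * U)) := by rw [← hSA]; simp only [Matrix.mul_assoc]
    _ = Uᴴ * (S * (U * D)) := by rw [hSU]
    _ = Uᴴ * ((S * U) * D) := by simp only [Matrix.mul_assoc]
    _ = (Uᴴ * U) * (D * D) := by rw [hSU]; simp only [Matrix.mul_assoc]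
    _ = Matrix.diagonal fun i => (p i : ℂ)^2 := by
        rw [hUU, Matrix.one_mul, hD, Matrix.diagonal_mul_diagonal]
        exact congrArg Matrix.diagonal (funext fun i => by ring)

lemma key (A B S T : Matrix (Fin n) (Fin n) ℂ) (hS : S.PosSemidef) (hT : T.PosSemidef)
    (hSA : S * S = Aᴴ * A) (hTB : T * T = Bᴴ * B) :
    2 * (((Aᴴ*B).trace).re)^2 ≤
      ((S*T).trace).re * (((Aᴴ*A).trace).re + ((Bᴴ*B).trace).re) := by
  classical
  set p : Fin n → ℝ := hS.1.eigenvalues with hp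
  set q : Fin n → ℝ := hT.1.eigenvalues with hq
  have hp0 : ∀ i, 0 ≤ p i := hS.eigenvalues_nonneg
  have hq0 : ∀ j, 0 ≤ q j := hT.eigenvalues_nonneg
  set U : Matrix (Fin n) (Fin n) ℂ := (hS.1.eigenvectorUnitary : Matrix (Fin n) (Fin n) ℂ) with hUdef
  set V : Matrix (Fin n) (Fin n) ℂ := (hT.1.eigenvectorUnitary : Matrix (Fin n) (Fin n) ℂ) with hVdef
  set D : Matrix (Fin n) (Fin n) ℂ := Matrix.diagonal (fun i => (p i : ℂ)) with hD
  set E : Matrix (Fin n) (Fin n) ℂ := Matrix.diagonal (fun j => (q j : ℂ)) with hE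
  have hUU : Uᴴ * U = 1 := by
    rw [← Matrix.star_eq_conjTranspose]
    exact Matrix.mem_unitaryGroup_iff'.mp hS.1.eigenvectorUnitary.2
  have hUU' : U * Uᴴ = 1 := by
    rw [← Matrix.star_eq_conjTranspose]
    exact Matrix.mem_unitaryGroup_iff.mp hS.1.eigenvectorUnitary.2
  have hVV : Vᴴ * V = 1 := by
    rw [← Matrix.star_eq_conjTranspose]
    exact Matrix.mem_unitaryGroup_iff'.mp hT.1.eigenvectorUnitary.2
  have hVV' : V * Vᴴ = 1 := by
    rw [← Matrix.star_eq_conjTranspose]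
    exact Matrix.mem_unitaryGroup_iff.mp hT.1.eigenvectorUnitary.2
  have specS : S = U * D * Uᴴ := by
    rw [← Matrix.star_eq_conjTranspose, hD]
    exact hS.1.spectral_theorem
  have specT : T = V * E * Vᴴ := by
    rw [← Matrix.star_eq_conjTranspose, hE]
    exact hT.1.spectral_theorem
  set M : Matrix (Fin n) (Fin n) ℂ := A * U with hMdef
  set N : Matrix (Fin n) (Fin n) ℂ := B * V with hNdef
  have hM : Mᴴ * M = Matrix.diagonal fun i => (p i : ℂ)^2 := conj_diag A S U p hUU specS hSA
  have hN : Nᴴ * N = Matrix.diagonal fun j => (q j : ℂ)^2 := conj_diag B T V q hVV specT hTB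
  set Z : Matrix (Fin n) (Fin n) ℂ := Mᴴ * N with hZdef
  set G : Matrix (Fin n) (Fin n) ℂ := Uᴴ * V with hGdef
  -- trace identities
  have htrc : (Aᴴ*B).trace = (Z * Gᴴ).trace := by
    have h1 : Z * Gᴴ = Uᴴ * ((Aᴴ*B) * U) := by
      rw [hZdef, hGdef, hMdef, hNdef]
      simp only [Matrix.conjTranspose_mul, Matrix.conjTranspose_conjTranspose,
        Matrix.mul_assoc]
      rw [← Matrix.mul_assoc V Vᴴ U, hVV', Matrix.one_mul]
    rw [h1, Matrix.trace_mul_comm Uᴴ (Aᴴ * B * U), Matrix.mul_assoc, hUU', Matrix.mul_one]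
  have htrs : (S*T).trace = (D * (G * (E * Gᴴ))).trace := by
    rw [specS, specT, hGdef]
    simp only [Matrix.conjTranspose_mul, Matrix.conjTranspose_conjTranspose,
      Matrix.mul_assoc]
    rw [Matrix.trace_mul_comm U (D * (Uᴴ * (V * (E * Vᴴ))))]
    simp only [Matrix.mul_assoc]
  have ha : ((Aᴴ*A).trace).re = ∑ i, (p i)^2 := by
    have h1 : (Mᴴ*M).trace = (Aᴴ*A).trace := by
      rw [hMdef, Matrix.conjTranspose_mul]
      simp only [Matrix.mul_assoc]
      rw [Matrix.trace_mul_comm Uᴴ (Aᴴ * (A * U))]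
      simp only [Matrix.mul_assoc]
      rw [hUU', Matrix.mul_one]
    rw [← h1, hM, Matrix.trace_diagonal]
    rw [show (∑ i, ((p i : ℂ))^2) = ((∑ i, (p i)^2 : ℝ) : ℂ) by push_cast; ring]
    exact Complex.ofReal_re _
  have hb : ((Bᴴ*B).trace).re = ∑ j, (q j)^2 := by
    have h1 : (Nᴴ*N).trace = (Bᴴ*B).trace := by
      rw [hNdef, Matrix.conjTranspose_mul]
      simp only [Matrix.mul_assoc]
      rw [Matrix.trace_mul_comm Vᴴ (Bᴴ * (B * V))]
      simp only [Matrix.mul_assoc]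
      rw [hVV', Matrix.mul_one]
    rw [← h1, hN, Matrix.trace_diagonal]
    rw [show (∑ j, ((q j : ℂ))^2) = ((∑ j, (q j)^2 : ℝ) : ℂ) by push_cast; ring]
    exact Complex.ofReal_re _
  have hs : ((S*T).trace).re = ∑ i, ∑ j, p i * q j * Complex.normSq (G i j) := by
    rw [htrs]
    have h1 : (D * (G * (E * Gᴴ))).trace
        = ((∑ i, ∑ j, p i * q j * Complex.normSq (G i j) : ℝ) : ℂ) := by
      rw [Matrix.trace]
      push_cast
      refine Finset.sum_congr rfl fun i _ => ?_
      rw [Matrix.diag]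
      rw [hD, Matrix.diagonal_mul]
      rw [Matrix.mul_apply]
      rw [Finset.mul_sum]
      refine Finset.sum_congr rfl fun j _ => ?_
      rw [hE, Matrix.diagonal_mul, Matrix.conjTranspose_apply]
      rw [show star (G i j) = (starRingEnd ℂ) (G i j) from rfl]
      rw [show G i j * ((q j : ℂ) * (starRingEnd ℂ) (G i j))
          = (q j : ℂ) * (G i j * (starRingEnd ℂ) (G i j)) by ring, Complex.mul_conj]
      push_cast
      ring
    rw [h1]
    exact Complex.ofReal_re _
  -- entrywise expansion of the trace of Z * Gᴴ
  have hZG : (Z * Gᴴ).trace = ∑ i, ∑ j, Z i j * (starRingEnd ℂ) (G i j) := by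
    rw [Matrix.trace]
    refine Finset.sum_congr rfl fun i _ => ?_
    rw [Matrix.diag, Matrix.mul_apply]
    exact Finset.sum_congr rfl fun j _ => by rw [Matrix.conjTranspose_apply]; rfl
  -- column norms
  have hMcol : ∀ i, ∑ k, Complex.normSq (M k i) = (p i)^2 := by
    intro i
    have h1 : (Mᴴ * M) i i = ((p i : ℂ))^2 := by rw [hM, Matrix.diagonal_apply_eq]
    have h2 : (Mᴴ * M) i i = ((∑ k, Complex.normSq (M k i) : ℝ) : ℂ) := by
      rw [Matrix.mul_apply]
      push_cast
      refine Finset.sum_congr rfl fun k _ => ?_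
      rw [Matrix.conjTranspose_apply, show star (M k i) = (starRingEnd ℂ) (M k i) from rfl,
        mul_comm, Complex.mul_conj]
    rw [h2] at h1
    exact_mod_cast h1
  have hNcol : ∀ j, ∑ k, Complex.normSq (N k j) = (q j)^2 := by
    intro j
    have h1 : (Nᴴ * N) j j = ((q j : ℂ))^2 := by rw [hN, Matrix.diagonal_apply_eq]
    have h2 : (Nᴴ * N) j j = ((∑ k, Complex.normSq (N k j) : ℝ) : ℂ) := by
      rw [Matrix.mul_apply]
      push_cast
      refine Finset.sum_congr rfl fun k _ => ?_
      rw [Matrix.conjTranspose_apply, show star (N k j) = (starRingEnd ℂ) (N k j) from rfl,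
        mul_comm, Complex.mul_conj]
    rw [h2] at h1
    exact_mod_cast h1
  -- entrywise bound |Z i j| ≤ p i * q j
  have hI1 : ∀ i j, ‖Z i j‖ ≤ p i * q j := by
    intro i j
    have hZe : Z i j = ∑ k, (starRingEnd ℂ) (M k i) * N k j := by
      rw [hZdef, Matrix.mul_apply]
      exact Finset.sum_congr rfl fun k _ => by rw [Matrix.conjTranspose_apply]; rfl
    have h1 : ‖Z i j‖ ≤ ∑ k, ‖M k i‖ * ‖N k j‖ := by
      rw [hZe]
      refine (norm_sum_le _ _).trans (le_of_eq ?_)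
      exact Finset.sum_congr rfl fun k _ => by rw [norm_mul, Complex.norm_conj]
    have h2 : (∑ k, ‖M k i‖ * ‖N k j‖)^2
        ≤ (∑ k, ‖M k i‖^2) * (∑ k, ‖N k j‖^2) :=
      Finset.sum_mul_sq_le_sq_mul_sq _ _ _
    have h3 : (∑ k, ‖M k i‖^2) = (p i)^2 := by
      rw [← hMcol i]
      exact Finset.sum_congr rfl fun k _ => Complex.sq_norm _
    have h4 : (∑ k, ‖N k j‖^2) = (q j)^2 := by
      rw [← hNcol j]
      exact Finset.sum_congr rfl fun k _ => Complex.sq_norm _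
    have h5 : ‖Z i j‖^2 ≤ (p i * q j)^2 := by
      calc ‖Z i j‖^2 ≤ (∑ k, ‖M k i‖ * ‖N k j‖)^2 := by
            apply pow_le_pow_left₀ (norm_nonneg _) h1
        _ ≤ (p i)^2 * (q j)^2 := by rw [← h3, ← h4]; exact h2
        _ = (p i * q j)^2 := by ring
    have h6 := abs_le_of_sq_le_sq h5 (mul_nonneg (hp0 i) (hq0 j))
    rwa [abs_of_nonneg (norm_nonneg _)] at h6
  -- the three double sums
  set W : ℝ := ∑ i, ∑ j, ‖Z i j‖ * ‖G i j‖ with hWdef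
  set ssum : ℝ := ∑ i, ∑ j, p i * q j * Complex.normSq (G i j) with hssumdef
  set R : ℝ := ∑ i, ∑ j, Complex.normSq (Z i j) * ((p i * q j)⁻¹) with hRdef
  have hssum0 : 0 ≤ ssum := by
    refine Finset.sum_nonneg fun i _ => Finset.sum_nonneg fun j _ => ?_
    have := Complex.normSq_nonneg (G i j)
    have := hp0 i; have := hq0 j
    positivity
  have habs : |((Aᴴ*B).trace).re| ≤ W := by
    rw [htrc, hZG]
    calc |(∑ i, ∑ j, Z i j * (starRingEnd ℂ) (G i j)).re|
        ≤ ‖∑ i, ∑ j, Z i j * (starRingEnd ℂ) (G i j)‖ := Complex.abs_re_le_norm _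
      _ ≤ ∑ i, ‖∑ j, Z i j * (starRingEnd ℂ) (G i j)‖ := norm_sum_le _ _
      _ ≤ ∑ i, ∑ j, ‖Z i j * (starRingEnd ℂ) (G i j)‖ :=
          Finset.sum_le_sum fun i _ => norm_sum_le _ _
      _ = W := Finset.sum_congr rfl fun i _ => Finset.sum_congr rfl fun j _ => by
          rw [norm_mul, Complex.norm_conj]
  have hW0 : 0 ≤ W := (abs_nonneg _).trans habs
  -- Cauchy-Schwarz on pairs
  have hCS : W^2 ≤ ssum * R := by
    have hterm : ∀ i j, ‖Z i j‖ * ‖G i j‖ ≤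
        (Real.sqrt (p i * q j) * ‖G i j‖)
          * (‖Z i j‖ * Real.sqrt ((p i * q j)⁻¹)) := by
      intro i j
      rcases eq_or_ne (p i * q j) 0 with h | h
      · have hz : ‖Z i j‖ = 0 :=
          le_antisymm (h ▸ hI1 i j) (norm_nonneg _)
        rw [hz]
        have h1 : (0:ℝ) ≤ (Real.sqrt (p i * q j) * ‖G i j‖) * (0 * Real.sqrt ((p i * q j)⁻¹)) := by
          positivity
        simpa using h1
      · have hpq : 0 < p i * q j :=
          lt_of_le_of_ne (mul_nonneg (hp0 _) (hq0 _)) (Ne.symm h)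
        have h1 : Real.sqrt (p i * q j) * Real.sqrt ((p i * q j)⁻¹) = 1 := by
          rw [Real.sqrt_inv, mul_inv_cancel₀ (Real.sqrt_pos.mpr hpq).ne']
        have heq : (Real.sqrt (p i * q j) * ‖G i j‖)
            * (‖Z i j‖ * Real.sqrt ((p i * q j)⁻¹))
            = ‖Z i j‖ * ‖G i j‖ := by
          calc (Real.sqrt (p i * q j) * ‖G i j‖)
              * (‖Z i j‖ * Real.sqrt ((p i * q j)⁻¹))
              = (Real.sqrt (p i * q j) * Real.sqrt ((p i * q j)⁻¹))
                * (‖Z i j‖ * ‖G i j‖) := by ring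
            _ = ‖Z i j‖ * ‖G i j‖ := by rw [h1, one_mul]
        exact heq.ge
    have hWle : W ≤ ∑ ij : Fin n × Fin n,
        (Real.sqrt (p ij.1 * q ij.2) * ‖G ij.1 ij.2‖)
          * (‖Z ij.1 ij.2‖ * Real.sqrt ((p ij.1 * q ij.2)⁻¹)) := by
      rw [Fintype.sum_prod_type]
      exact Finset.sum_le_sum fun i _ => Finset.sum_le_sum fun j _ => hterm i j
    have hsq : (∑ ij : Fin n × Fin n,
        (Real.sqrt (p ij.1 * q ij.2) * ‖G ij.1 ij.2‖)
          * (‖Z ij.1 ij.2‖ * Real.sqrt ((p ij.1 * q ij.2)⁻¹)))^2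
        ≤ (∑ ij : Fin n × Fin n, (Real.sqrt (p ij.1 * q ij.2) * ‖G ij.1 ij.2‖)^2)
          * (∑ ij : Fin n × Fin n,
            (‖Z ij.1 ij.2‖ * Real.sqrt ((p ij.1 * q ij.2)⁻¹))^2) :=
      Finset.sum_mul_sq_le_sq_mul_sq _ _ _
    have hf2 : (∑ ij : Fin n × Fin n,
        (Real.sqrt (p ij.1 * q ij.2) * ‖G ij.1 ij.2‖)^2) = ssum := by
      rw [Fintype.sum_prod_type, hssumdef]
      refine Finset.sum_congr rfl fun i _ => Finset.sum_congr rfl fun j _ => ?_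
      rw [mul_pow, Real.sq_sqrt (mul_nonneg (hp0 _) (hq0 _)), Complex.sq_norm]
    have hg2 : (∑ ij : Fin n × Fin n,
        (‖Z ij.1 ij.2‖ * Real.sqrt ((p ij.1 * q ij.2)⁻¹))^2) = R := by
      rw [Fintype.sum_prod_type, hRdef]
      refine Finset.sum_congr rfl fun i _ => Finset.sum_congr rfl fun j _ => ?_
      rw [mul_pow, Real.sq_sqrt (inv_nonneg.mpr (mul_nonneg (hp0 _) (hq0 _))), Complex.sq_norm]
    calc W^2 ≤ (∑ ij : Fin n × Fin n,
          (Real.sqrt (p ij.1 * q ij.2) * ‖G ij.1 ij.2‖)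
            * (‖Z ij.1 ij.2‖ * Real.sqrt ((p ij.1 * q ij.2)⁻¹)))^2 :=
        pow_le_pow_left₀ hW0 hWle 2
      _ ≤ ssum * R := by rw [← hf2, ← hg2]; exact hsq
  -- bounding R
  have hI2 : ∑ i, ∑ j, Complex.normSq (Z i j) * ((q j)⁻¹)^2 ≤ ∑ i, (p i)^2 := by
    have h0 := bessel M N p q hM hN
    exact h0
  have hI3 : ∑ i, ∑ j, Complex.normSq (Z i j) * ((p i)⁻¹)^2 ≤ ∑ j, (q j)^2 := by
    have h0 := bessel N M q p hN hM
    have hNM : Nᴴ * M = Zᴴ := by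
      rw [hZdef, Matrix.conjTranspose_mul Mᴴ N, Matrix.conjTranspose_conjTranspose]
    rw [hNM] at h0
    rw [Finset.sum_comm]
    calc ∑ j, ∑ i, Complex.normSq (Z i j) * ((p i)⁻¹)^2
        = ∑ j, ∑ i, Complex.normSq (Zᴴ j i) * ((p i)⁻¹)^2 := by
          refine Finset.sum_congr rfl fun j _ => Finset.sum_congr rfl fun i _ => ?_
          rw [Matrix.conjTranspose_apply, show star (Z i j) = (starRingEnd ℂ) (Z i j) from rfl,
            Complex.normSq_conj]
      _ ≤ ∑ j, (q j)^2 := h0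
  have hR : R ≤ ((∑ j, (q j)^2) + (∑ i, (p i)^2))/2 := by
    have hptwise : ∀ i j, Complex.normSq (Z i j) * ((p i * q j)⁻¹)
        ≤ (Complex.normSq (Z i j) * ((p i)⁻¹)^2 + Complex.normSq (Z i j) * ((q j)⁻¹)^2)/2 := by
      intro i j
      have hn0 := Complex.normSq_nonneg (Z i j)
      have h1 : (p i * q j)⁻¹ ≤ (((p i)⁻¹)^2 + ((q j)⁻¹)^2)/2 := by
        rw [mul_inv]
        nlinarith [sq_nonneg ((p i)⁻¹ - (q j)⁻¹)]
      nlinarith [mul_le_mul_of_nonneg_left h1 hn0]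
    calc R ≤ ∑ i, ∑ j, (Complex.normSq (Z i j) * ((p i)⁻¹)^2
          + Complex.normSq (Z i j) * ((q j)⁻¹)^2)/2 := by
          exact Finset.sum_le_sum fun i _ => Finset.sum_le_sum fun j _ => hptwise i j
      _ = ((∑ i, ∑ j, Complex.normSq (Z i j) * ((p i)⁻¹)^2)
          + (∑ i, ∑ j, Complex.normSq (Z i j) * ((q j)⁻¹)^2))/2 := by
          simp only [← Finset.sum_div, Finset.sum_add_distrib]
      _ ≤ ((∑ j, (q j)^2) + (∑ i, (p i)^2))/2 := by
          have := hI2; have := hI3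
          linarith
  -- put everything together
  have hc2 : (((Aᴴ*B).trace).re)^2 ≤ ssum * (((∑ j, (q j)^2) + (∑ i, (p i)^2))/2) := by
    calc (((Aᴴ*B).trace).re)^2 = |((Aᴴ*B).trace).re|^2 := (sq_abs _).symm
      _ ≤ W^2 := pow_le_pow_left₀ (abs_nonneg _) habs 2
      _ ≤ ssum * R := hCS
      _ ≤ ssum * (((∑ j, (q j)^2) + (∑ i, (p i)^2))/2) :=
        mul_le_mul_of_nonneg_left hR hssum0
  rw [ha, hb, hs]
  nlinarith [hc2]

lemma re_trace_psd_mul_nonneg (S T : Matrix (Fin n) (Fin n) ℂ)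
    (hS : S.PosSemidef) (hT : T.PosSemidef) : 0 ≤ ((S*T).trace).re := by
  obtain ⟨W, hW⟩ := psd_eq_ctm S hS
  obtain ⟨X, hX⟩ := psd_eq_ctm T hT
  have h : (S*T).trace = (((W*Xᴴ)ᴴ)*(W*Xᴴ)).trace := by
    rw [hW, hX, Matrix.conjTranspose_mul W Xᴴ, Matrix.conjTranspose_conjTranspose]
    have h2 : (X*Wᴴ*(W*Xᴴ)).trace = (Wᴴ*(W*(Xᴴ*X))).trace := by
      rw [Matrix.mul_assoc X Wᴴ (W*Xᴴ), Matrix.trace_mul_comm X (Wᴴ*(W*Xᴴ))]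
      simp only [Matrix.mul_assoc]
    calc (Wᴴ*W*(Xᴴ*X)).trace = (Wᴴ*(W*(Xᴴ*X))).trace := by simp only [Matrix.mul_assoc]
      _ = (X*Wᴴ*(W*Xᴴ)).trace := h2.symm
  rw [h]
  exact re_trace_ctm_nonneg _

end TwoMulAux

/-- For all `n × n` complex matrices `A, B`,
`2·‖A+B‖_F² ≤ (√2 + 1)·‖|A|+|B|‖_F²`. -/
theorem two_mul_sq_frobenius_norm_add_le' {n : ℕ} (A B : Matrix (Fin n) (Fin n) ℂ) :
    2 * frobeniusNorm' (A + B) ^ 2 ≤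
      (Real.sqrt 2 + 1) * frobeniusNorm' (matrixAbs A + matrixAbs B) ^ 2 := by
  classical
  set S := matrixAbs A with hSdef
  set T := matrixAbs B with hTdef
  have hS : S.PosSemidef := TwoMulAux.psdSqrt_psd _ (Matrix.posSemidef_conjTranspose_mul_self A)
  have hT : T.PosSemidef := TwoMulAux.psdSqrt_psd _ (Matrix.posSemidef_conjTranspose_mul_self B)
  have hSA : S * S = Aᴴ * A := TwoMulAux.psdSqrt_mul_self _ (Matrix.posSemidef_conjTranspose_mul_self A)
  have hTB : T * T = Bᴴ * B := TwoMulAux.psdSqrt_mul_self _ (Matrix.posSemidef_conjTranspose_mul_self B)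
  have hfrob : ∀ X : Matrix (Fin n) (Fin n) ℂ,
      frobeniusNorm' X ^ 2 = ((Xᴴ*X).trace).re := by
    intro X
    rw [frobeniusNorm',
      show matrixAbs X ^ 2 = Xᴴ*X by
        rw [sq]; exact TwoMulAux.psdSqrt_mul_self _ (Matrix.posSemidef_conjTranspose_mul_self X)]
    exact Real.sq_sqrt (TwoMulAux.re_trace_ctm_nonneg X)
  set a := ((Aᴴ*A).trace).re with hadef
  set b := ((Bᴴ*B).trace).re with hbdef
  set c := ((Aᴴ*B).trace).re with hcdef
  set s := ((S*T).trace).re with hsdef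
  have hba : ((Bᴴ*A).trace).re = c := by
    have h1 : (Bᴴ*A) = (Aᴴ*B)ᴴ := by
      rw [Matrix.conjTranspose_mul Aᴴ B, Matrix.conjTranspose_conjTranspose]
    rw [h1, Matrix.trace_conjTranspose]
    exact Complex.conj_re _
  have hLHS : frobeniusNorm' (A+B) ^ 2 = a + b + 2*c := by
    rw [hfrob]
    have hexp : (A+B)ᴴ*(A+B) = Aᴴ*A + (Bᴴ*B + (Aᴴ*B + Bᴴ*A)) := by
      rw [Matrix.conjTranspose_add, Matrix.add_mul, Matrix.mul_add, Matrix.mul_add]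
      abel
    rw [hexp, Matrix.trace_add, Matrix.trace_add, Matrix.trace_add]
    simp only [Complex.add_re]
    rw [hba, ← hadef, ← hbdef, ← hcdef]
    ring
  have hRHS : frobeniusNorm' (S+T) ^ 2 = a + b + 2*s := by
    rw [hfrob]
    have hST : (S+T)ᴴ = S+T := by rw [Matrix.conjTranspose_add, hS.1, hT.1]
    rw [hST]
    have hexp : (S+T)*(S+T) = S*S + (T*T + (S*T + T*S)) := by
      rw [Matrix.add_mul, Matrix.mul_add, Matrix.mul_add]
      abel
    rw [hexp, Matrix.trace_add, Matrix.trace_add, Matrix.trace_add]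
    simp only [Complex.add_re]
    rw [hSA, hTB, Matrix.trace_mul_comm T S, ← hadef, ← hbdef, ← hsdef]
    ring
  have hkey := TwoMulAux.key A B S T hS hT hSA hTB
  rw [← hadef, ← hbdef, ← hcdef, ← hsdef] at hkey
  have hs0 : 0 ≤ s := TwoMulAux.re_trace_psd_mul_nonneg S T hS hT
  have ha0 : 0 ≤ a := TwoMulAux.re_trace_ctm_nonneg A
  have hb0 : 0 ≤ b := TwoMulAux.re_trace_ctm_nonneg B
  rw [hLHS, hRHS]
  set r := Real.sqrt 2 with hrdef
  have hr2 : r^2 = 2 := Real.sq_sqrt (by norm_num)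
  have hr1 : 1 ≤ r := by nlinarith [Real.sqrt_nonneg 2]
  have hX0 : 0 ≤ (r-1)*(a+b) := mul_nonneg (by linarith) (by linarith)
  have hY0 : 0 ≤ 2*(r+1)*s := mul_nonneg (by linarith) hs0
  have hfin : 4*c ≤ (r-1)*(a+b) + 2*(r+1)*s := by
    rcases le_or_gt c 0 with hc | hc
    · linarith
    · have hrr : (r-1)*(r+1) = 1 := by nlinarith [hr2]
      have hXY : ((r-1)*(a+b)) * (2*(r+1)*s) = 2*((a+b)*s) := by
        calc ((r-1)*(a+b)) * (2*(r+1)*s) = ((r-1)*(r+1)) * (2*((a+b)*s)) := by ring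
          _ = 2*((a+b)*s) := by rw [hrr]; ring
      have h16 : (4*c)^2 ≤ ((r-1)*(a+b) + 2*(r+1)*s)^2 := by
        nlinarith [sq_nonneg ((r-1)*(a+b) - 2*(r+1)*s), hkey, hXY]
      have habs := abs_le_of_sq_le_sq h16 (by linarith)
      calc 4*c ≤ |4*c| := le_abs_self _
        _ ≤ _ := habs
  linarith
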